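/- Let p be an odd prime and let s, t, u, v, α, β ∈ F_p satisfy s·u·(s+u) ≠ 0. Define Δ := (2βs + αs − α² − 2αt)(s+u)u + (αu + tu − sv)², and for x ∈ F_p write C(x,2) := x(x−1)/2 (well defined since 2 is invertible in F_p). Then the number of solutions (x,y) ∈ F_p × F_p of the system sx + uy = α and s·C(x,2) + tx + u·C(y,2) + vy = β equals 2 if Δ is a nonzero square in F_p, equals 1 if Δ = 0, and equals 0 if Δ is not a square in F_p. -/

import Mathlib

open scoped Classical in
/-- The number of solutions of the system of equations arising in the pretty good
measurement for the Heisenberg group: with `su(s+u) ≠ 0` and the discriminant `Δ`,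
there are 2 solutions if `Δ` is a nonzero square, 1 if `Δ = 0`, and 0 otherwise. -/
theorem stmt_17 (p : ℕ) [Fact p.Prime] (hp : p ≠ 2)
    (s t u v α β : ZMod p) (h : s * u * (s + u) ≠ 0) :
    let Δ : ZMod p :=
      (2 * β * s + α * s - α ^ 2 - 2 * α * t) * (s + u) * u + (α * u + t * u - s * v) ^ 2
    let C : ZMod p → ZMod p := fun x => x * (x - 1) / 2
    Nat.card {q : ZMod p × ZMod p //
        s * q.1 + u * q.2 = α ∧
        s * C q.1 + t * q.1 + u * C q.2 + v * q.2 = β} =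
      if Δ = 0 then 1 else if IsSquare Δ then 2 else 0 := by
  intro Δ C
  have hs : s ≠ 0 := fun hs => h (by rw [hs]; ring)
  have hu : u ≠ 0 := fun hu => h (by rw [hu]; ring)
  have hsu : s + u ≠ 0 := fun hsu => h (by rw [hsu]; ring)
  have h2 : (2 : ZMod p) ≠ 0 := by
    intro h2
    have hdvd : p ∣ 2 := (ZMod.natCast_eq_zero_iff 2 p).mp (by exact_mod_cast h2)
    exact hp ((Nat.prime_dvd_prime_iff_eq Fact.out Nat.prime_two).mp hdvd)
  haveI : NeZero (2 : ZMod p) := ⟨h2⟩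
  set A : ZMod p := s * (s + u) with hA
  set B : ZMod p := 2 * (t * u - α * s - v * s) with hB
  set Cc : ZMod p := α ^ 2 - α * u + 2 * v * α - 2 * u * β with hCc
  have hAne : A ≠ 0 := mul_ne_zero hs hsu
  -- key equivalence
  have key : ∀ q : ZMod p × ZMod p,
      (s * q.1 + u * q.2 = α ∧
        s * C q.1 + t * q.1 + u * C q.2 + v * q.2 = β)
      ↔ (A * (q.1 * q.1) + B * q.1 + Cc = 0 ∧ q.2 = (α - s * q.1) / u) := by
    rintro ⟨x, y⟩
    simp only [C]
    constructor
    · rintro ⟨h1, h2'⟩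
      have hxy : s * (x * (x - 1)) / 2 + t * x + u * (y * (y - 1)) / 2 + v * y = β := by
        rw [← h2']; ring
      have hq : A * (x * x) + B * x + Cc = 0 := by
        have h2'' : s * (x * (x - 1)) + 2 * (t * x) + u * (y * (y - 1)) + 2 * (v * y)
            = 2 * β := by
          field_simp at hxy
          linear_combination hxy
        rw [hA, hB, hCc]
        linear_combination u * h2'' + (s * x - u * y - α - 2 * v + u) * h1
      refine ⟨hq, ?_⟩
      field_simp
      linear_combination h1
    · rintro ⟨hq, hy⟩
      have h1 : s * x + u * y = α := by
        rw [hy]; field_simp; ring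
      refine ⟨h1, ?_⟩
      have h2'' : 2 * u * ((s * (x * (x - 1)) / 2 + t * x + u * (y * (y - 1)) / 2
          + v * y) - β) = 0 := by
        field_simp
        rw [hA, hB, hCc] at hq
        linear_combination hq - (s * x - u * y - α - 2 * v + u) * h1
      have := mul_eq_zero.mp h2''
      rcases this with h' | h'
      · exact absurd (mul_eq_zero.mp h') (by push_neg; exact ⟨h2, hu⟩)
      · have : s * (x * (x - 1)) / 2 + t * x + u * (y * (y - 1)) / 2 + v * y = β :=
          sub_eq_zero.mp h'
        linear_combination this
  -- bijection with roots of the quadratic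
  have hcard : Nat.card {q : ZMod p × ZMod p //
      s * q.1 + u * q.2 = α ∧
      s * C q.1 + t * q.1 + u * C q.2 + v * q.2 = β}
      = Nat.card {x : ZMod p // A * (x * x) + B * x + Cc = 0} := by
    apply Nat.card_eq_of_bijective (fun q => ⟨q.1.1, ((key q.1).mp q.2).1⟩)
    constructor
    · rintro ⟨q, hq⟩ ⟨q', hq'⟩ hqq
      have h1 := ((key q).mp hq).2
      have h2' := ((key q').mp hq').2
      simp only [Subtype.mk.injEq] at hqq ⊢
      have : q.1 = q'.1 := hqq
      exact Prod.ext this (by rw [h1, h2', this])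
    · rintro ⟨x, hx⟩
      exact ⟨⟨(x, (α - s * x) / u), (key _).mpr ⟨hx, rfl⟩⟩, rfl⟩
  rw [hcard]
  -- discriminant computation
  have hD : discrim A B Cc = 4 * Δ := by
    rw [discrim, hA, hB, hCc]
    show _ = 4 * ((2 * β * s + α * s - α ^ 2 - 2 * α * t) * (s + u) * u
      + (α * u + t * u - s * v) ^ 2)
    ring
  have h4 : (4 : ZMod p) ≠ 0 := by
    intro h4
    exact h2 (by have : (2 : ZMod p) * 2 = 0 := by linear_combination h4
                 rcases mul_eq_zero.mp this with h' | h' <;> exact h')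
  by_cases hΔ : Δ = 0
  · simp only [hΔ, if_true]
    have hD0 : discrim A B Cc = 0 := by rw [hD, hΔ, mul_zero]
    haveI : Unique {x : ZMod p // A * (x * x) + B * x + Cc = 0} := by
      refine ⟨⟨⟨-B / (2 * A), ?_⟩⟩, ?_⟩
      · rw [quadratic_eq_zero_iff_of_discrim_eq_zero hAne hD0]
      · rintro ⟨x, hx⟩
        rw [quadratic_eq_zero_iff_of_discrim_eq_zero hAne hD0] at hx
        simp [hx]
    exact Nat.card_unique
  · rw [if_neg hΔ]
    by_cases hsq : IsSquare Δ
    · rw [if_pos hsq]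
      obtain ⟨z, hz⟩ := hsq
      have hz0 : z ≠ 0 := by
        intro h0; exact hΔ (by rw [hz, h0, mul_zero])
      have hD' : discrim A B Cc = (2 * z) * (2 * z) := by
        rw [hD, hz]; ring
      have hne : (-B + 2 * z) / (2 * A) ≠ (-B - 2 * z) / (2 * A) := by
        intro heq
        have h2A : (2 : ZMod p) * A ≠ 0 := mul_ne_zero h2 hAne
        field_simp at heq
        have : (4 : ZMod p) * z = 0 := by linear_combination heq
        rcases mul_eq_zero.mp this with h' | h'
        · exact h4 h'
        · exact hz0 h'
      rw [Nat.card_eq_two_iff]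
      refine ⟨⟨(-B + 2 * z) / (2 * A), by
          rw [quadratic_eq_zero_iff hAne hD']; left; rfl⟩,
        ⟨(-B - 2 * z) / (2 * A), by
          rw [quadratic_eq_zero_iff hAne hD']; right; rfl⟩, ?_, ?_⟩
      · simp only [ne_eq, Subtype.mk.injEq]
        exact hne
      · ext ⟨x, hx⟩
        simp only [Set.mem_univ, iff_true, Set.mem_insert_iff, Set.mem_singleton_iff]
        rw [quadratic_eq_zero_iff hAne hD' x] at hx
        rcases hx with h' | h'
        · exact Or.inl (Subtype.ext h')
        · exact Or.inr (Subtype.ext h')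
    · rw [if_neg hsq]
      haveI : IsEmpty {x : ZMod p // A * (x * x) + B * x + Cc = 0} := by
        refine ⟨fun ⟨x, hx⟩ => ?_⟩
        refine quadratic_ne_zero_of_discrim_ne_sq ?_ x hx
        intro w hw
        apply hsq
        have e : (4 : ZMod p) * (w / 2 * (w / 2)) = w * w := by
          field_simp; ring
        have e2 : (4 : ZMod p) * Δ = 4 * (w / 2 * (w / 2)) := by
          rw [e, ← hD, hw, sq]
        exact ⟨w / 2, mul_left_cancel₀ h4 e2⟩
      exact Nat.card_of_isEmpty
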